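/- Key approximation step for periodic functions: if f : ℝ → ℝ is continuous and 2π-periodic, then for every ε > 0 there exist real polynomials p and q such that |f(θ) sin²θ − (p(cos θ) sin²θ + q(cos θ) sin θ)| < ε for all θ ∈ ℝ. -/
import Mathlib

open Real

/-- An even `2π`-periodic function is constant on fibers of `cos`. -/
lemma even_periodic_eq_of_cos_eq (F : ℝ → ℝ) (heven : ∀ x, F (-x) = F x)
    (hper : ∀ x, F (x + 2 * Real.pi) = F x) {a b : ℝ}
    (h : Real.cos a = Real.cos b) : F a = F b := by
  have hP : Function.Periodic F (2 * Real.pi) := hper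
  have hint : ∀ (k : ℤ) (x : ℝ), F (x + k * (2 * Real.pi)) = F x := by
    intro k x
    simpa [mul_comm] using (hP.int_mul k) x
  obtain ⟨k, hk | hk⟩ := Real.cos_eq_cos_iff.mp h
  · have : b = a + k * (2 * Real.pi) := by rw [hk]; ring
    rw [this, hint]
  · have : b = -a + k * (2 * Real.pi) := by rw [hk]; ring
    rw [this, hint, heven]

/-- Key approximation step for periodic functions: a continuous `2π`-periodic
function multiplied by `sin² θ` can be uniformly approximated by
`p(cos θ) sin² θ + q(cos θ) sin θ` for real polynomials `p`, `q`. -/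
theorem periodic_sin_sq_approx (f : ℝ → ℝ) (hf : Continuous f)
    (hper : ∀ θ : ℝ, f (θ + 2 * Real.pi) = f θ) (ε : ℝ) (hε : 0 < ε) :
    ∃ p q : Polynomial ℝ, ∀ θ : ℝ,
      |f θ * Real.sin θ ^ 2 -
        (p.eval (Real.cos θ) * Real.sin θ ^ 2 +
          q.eval (Real.cos θ) * Real.sin θ)| < ε := by
  set g : ℝ → ℝ := fun θ => (f θ + f (-θ)) / 2 with hg
  set k : ℝ → ℝ := fun θ => (f θ - f (-θ)) / 2 * Real.sin θ with hk
  have hfneg : ∀ x : ℝ, f (-x - 2 * Real.pi) = f (-x) := by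
    intro x
    have := hper (-x - 2 * Real.pi)
    simpa using this.symm
  have hgeven : ∀ x, g (-x) = g x := by intro x; simp [hg, add_comm]
  have hgper : ∀ x, g (x + 2 * Real.pi) = g x := by
    intro x; simp only [hg, hper]
    rw [show -(x + 2 * Real.pi) = -x - 2 * Real.pi by ring, hfneg]
  have hkeven : ∀ x, k (-x) = k x := by
    intro x; simp only [hk, Real.sin_neg, neg_neg]; ring
  have hkper : ∀ x, k (x + 2 * Real.pi) = k x := by
    intro x; simp only [hk, hper, Real.sin_add, Real.sin_two_pi, Real.cos_two_pi]
    rw [show -(x + 2 * Real.pi) = -x - 2 * Real.pi by ring, hfneg]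
    ring
  set G : ℝ → ℝ := fun x => g (Real.arccos x) with hG
  set K : ℝ → ℝ := fun x => k (Real.arccos x) with hK
  have hGcos : ∀ θ, G (Real.cos θ) = g θ := by
    intro θ
    exact even_periodic_eq_of_cos_eq g hgeven hgper
      (Real.cos_arccos (Real.neg_one_le_cos θ) (Real.cos_le_one θ))
  have hKcos : ∀ θ, K (Real.cos θ) = k θ := by
    intro θ
    exact even_periodic_eq_of_cos_eq k hkeven hkper
      (Real.cos_arccos (Real.neg_one_le_cos θ) (Real.cos_le_one θ))
  have hGc : Continuous G :=
    ((hf.comp Real.continuous_arccos).add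
      (hf.comp Real.continuous_arccos.neg)).div_const 2
  have hKc : Continuous K :=
    (((hf.comp Real.continuous_arccos).sub
      (hf.comp Real.continuous_arccos.neg)).div_const 2).mul
      (Real.continuous_sin.comp Real.continuous_arccos)
  obtain ⟨p, hp⟩ := exists_polynomial_near_of_continuousOn (-1) 1 G
    hGc.continuousOn (ε / 2) (by linarith)
  obtain ⟨q, hq⟩ := exists_polynomial_near_of_continuousOn (-1) 1 K
    hKc.continuousOn (ε / 2) (by linarith)
  refine ⟨p, q, fun θ => ?_⟩
  have hmem : Real.cos θ ∈ Set.Icc (-1 : ℝ) 1 :=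
    ⟨Real.neg_one_le_cos θ, Real.cos_le_one θ⟩
  have h1 := hp _ hmem
  have h2 := hq _ hmem
  have hdecomp : f θ * Real.sin θ ^ 2 =
      G (Real.cos θ) * Real.sin θ ^ 2 + K (Real.cos θ) * Real.sin θ := by
    rw [hGcos, hKcos, hg, hk]; ring
  rw [hdecomp]
  set A := G (Real.cos θ) - p.eval (Real.cos θ) with hA
  set B := K (Real.cos θ) - q.eval (Real.cos θ) with hB
  have hAe : |A| < ε / 2 := by rw [hA, abs_sub_comm]; exact h1
  have hBe : |B| < ε / 2 := by rw [hB, abs_sub_comm]; exact h2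
  have hexpr : G (Real.cos θ) * Real.sin θ ^ 2 + K (Real.cos θ) * Real.sin θ -
      (p.eval (Real.cos θ) * Real.sin θ ^ 2 + q.eval (Real.cos θ) * Real.sin θ)
      = A * Real.sin θ ^ 2 + B * Real.sin θ := by rw [hA, hB]; ring
  rw [hexpr]
  have hs1 : Real.sin θ ^ 2 ≤ 1 := sin_sq_le_one θ
  have hs2 : |Real.sin θ| ≤ 1 := abs_sin_le_one θ
  calc |A * Real.sin θ ^ 2 + B * Real.sin θ|
      ≤ |A * Real.sin θ ^ 2| + |B * Real.sin θ| := abs_add_le _ _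
    _ = |A| * Real.sin θ ^ 2 + |B| * |Real.sin θ| := by
        rw [abs_mul, abs_mul, abs_sq]
    _ ≤ |A| + |B| := by nlinarith [abs_nonneg A, abs_nonneg B]
    _ < ε := by linarith
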